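/- Fix integers n ≥ 1 and P ≥ 1. For each i ∈ {1,…,n}, let R⁽ⁱ⁾ be a real symmetric P×P matrix with all diagonal entries equal to 1, and suppose there exists a subset K⁽ⁱ⁾ ⊆ {1,…,P} with k⁽ⁱ⁾ = |K⁽ⁱ⁾| such that for p ≠ q the off-diagonal entry R⁽ⁱ⁾_{pq} is strictly positive if p, q ∈ K⁽ⁱ⁾ and equal to 0 otherwise, all off-diagonal entries are at most 1, and whenever k⁽ⁱ⁾ ≥ 4 every nonzero off-diagonal entry of R⁽ⁱ⁾ is strictly greater than ((k⁽ⁱ⁾−1)/k⁽ⁱ⁾)². Let C = Q · blkdiag(R⁽¹⁾,…,R⁽ⁿ⁾) · Qᵀ for some orthogonal matrix Q ∈ ℝ^{nP×nP}. Then the number of eigenvalues of C that are strictly greater than 1, counted with algebraic multiplicity, is exactly equal to the number of indices i with k⁽ⁱ⁾ ≥ 2 (i.e., the number of components exhibiting nonzero correlation). -/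

import Mathlib

open Matrix Finset Polynomial

lemma charpoly_conj_aux {m : Type*} [Fintype m] [DecidableEq m]
    (Q Q' A : Matrix m m ℝ) (h1 : Q * Q' = 1) (h2 : Q' * Q = 1) :
    (Q * A * Q').charpoly = A.charpoly := by
  have key : charmatrix (Q * A * Q')
      = C.mapMatrix Q * charmatrix A * C.mapMatrix Q' := by
    unfold charmatrix
    rw [Matrix.mul_sub, Matrix.sub_mul]
    congr 1
    · have hc : Commute (scalar m (X : ℝ[X])) (C.mapMatrix Q') :=
        scalar_commute _ (fun r' => Commute.all _ _) _
      rw [mul_assoc, hc.eq, ← mul_assoc, ← _root_.map_mul, h1, _root_.map_one, one_mul]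
    · rw [← _root_.map_mul, ← _root_.map_mul]
  have hdet : (C.mapMatrix Q' * C.mapMatrix Q : Matrix m m ℝ[X]).det = 1 := by
    rw [← _root_.map_mul, h2, _root_.map_one, det_one]
  rw [Matrix.charpoly, key, det_mul, det_mul, mul_comm, ← mul_assoc, ← det_mul, hdet, one_mul,
    Matrix.charpoly]

lemma charmatrix_blockDiagonal' {m o : Type*} [Fintype m] [DecidableEq m] [Fintype o] [DecidableEq o]
    (M : o → Matrix m m ℝ) :
    charmatrix (blockDiagonal M) = blockDiagonal (fun i => charmatrix (M i)) := by
  ext ⟨p, i⟩ ⟨q, j⟩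
  by_cases h : (p, i) = (q, j)
  · cases h
    simp [charmatrix_apply, blockDiagonal_apply, diagonal_apply]
  · rw [charmatrix_apply_ne _ _ _ h, blockDiagonal_apply, blockDiagonal_apply]
    by_cases hij : i = j
    · subst hij
      have hpq : p ≠ q := fun hpq => h (by rw [hpq])
      simp [charmatrix_apply_ne _ _ _ hpq]
    · simp [hij]

lemma charpoly_blockDiagonal' {m o : Type*} [Fintype m] [DecidableEq m] [Fintype o] [DecidableEq o]
    (M : o → Matrix m m ℝ) :
    (blockDiagonal M).charpoly = ∏ i, (M i).charpoly := by
  rw [Matrix.charpoly, charmatrix_blockDiagonal', det_blockDiagonal]; rfl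

lemma charpoly_diagonal' {m : Type*} [Fintype m] [DecidableEq m] (d : m → ℝ) :
    (diagonal d).charpoly = ∏ i, (X - C (d i)) := by
  rw [Matrix.charpoly]
  have : charmatrix (diagonal d) = diagonal (fun i => X - C (d i)) := by
    ext i j
    by_cases h : i = j
    · subst h; simp [charmatrix_apply]
    · rw [charmatrix_apply_ne _ _ _ h, diagonal_apply_ne _ h, diagonal_apply_ne _ h, map_zero,
        neg_zero]
  rw [this, det_diagonal]

-- charpoly of real hermitian matrix
lemma charpoly_isHermitian {m : Type*} [Fintype m] [DecidableEq m]
    {A : Matrix m m ℝ} (hA : A.IsHermitian) :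
    A.charpoly = ∏ i, (X - C (hA.eigenvalues i)) := by
  have hs := hA.spectral_theorem
  have hU1 : (hA.eigenvectorUnitary : Matrix m m ℝ) * (star hA.eigenvectorUnitary : Matrix m m ℝ) = 1 := by
    simpa using   unitary.mul_star_self_of_mem hA.eigenvectorUnitary.2
  have hU2 : (star hA.eigenvectorUnitary : Matrix m m ℝ) * (hA.eigenvectorUnitary : Matrix m m ℝ) = 1 := by
    simpa using   unitary.star_mul_self_of_mem hA.eigenvectorUnitary.2
  calc A.charpoly = (diagonal (RCLike.ofReal ∘ hA.eigenvalues)).charpoly := by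
        conv_lhs => rw [hs]
        exact charpoly_conj_aux _ _ _ hU1 hU2
    _ = ∏ i, (X - C (hA.eigenvalues i)) := by
        rw [charpoly_diagonal']; rfl

-- quadratic form expansion
lemma quad_expand {m : Type*} [Fintype m] [DecidableEq m] (A : Matrix m m ℝ) (x : m → ℝ)
    (hd : ∀ p, A p p = 1) :
    x ⬝ᵥ A *ᵥ x = (∑ p, (x p)^2) + ∑ p, ∑ q ∈ univ.erase p, A p q * (x p * x q) := by
  simp only [dotProduct, mulVec, dotProduct, Finset.mul_sum]
  rw [← Finset.sum_add_distrib]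
  refine Finset.sum_congr rfl fun p _ => ?_
  rw [← Finset.add_sum_erase (h := Finset.mem_univ p)]
  rw [hd p]
  have : ∑ q ∈ univ.erase p, x p * (A p q * x q) = ∑ q ∈ univ.erase p, A p q * (x p * x q) :=
    Finset.sum_congr rfl fun q _ => by ring
  rw [this]; ring

-- L1 : rank-one domination
lemma quad_le_rankone {m : Type*} [Fintype m] [DecidableEq m] (A : Matrix m m ℝ) (w : m → ℝ)
    (hd : ∀ p, A p p = 1) (hoff : ∀ p q, p ≠ q → A p q = w p * w q) (x : m → ℝ) :
    x ⬝ᵥ A *ᵥ x ≤ x ⬝ᵥ x + (w ⬝ᵥ x)^2 := by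
  rw [quad_expand A x hd]
  have hxx : x ⬝ᵥ x = ∑ p, (x p)^2 := by simp [dotProduct, sq]
  rw [hxx]
  have key : ∑ p, ∑ q ∈ univ.erase p, A p q * (x p * x q)
      = (w ⬝ᵥ x)^2 - ∑ p, (w p * x p)^2 := by
    have : ∀ p : m, ∑ q ∈ univ.erase p, A p q * (x p * x q)
        = (∑ q, (w p * x p) * (w q * x q)) - (w p * x p)^2 := by
      intro p
      rw [← Finset.add_sum_erase (h := Finset.mem_univ p)]
      have : ∑ q ∈ univ.erase p, A p q * (x p * x q)
          = ∑ q ∈ univ.erase p, (w p * x p) * (w q * x q) := by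
        refine Finset.sum_congr rfl fun q hq => ?_
        rw [hoff p q (Ne.symm (Finset.ne_of_mem_erase hq))]; ring
      rw [this]; ring
    rw [Finset.sum_congr rfl fun p _ => this p, Finset.sum_sub_distrib]
    congr 1
    rw [sq, dotProduct, Finset.sum_mul_sum]
  rw [key]
  have : 0 ≤ ∑ p, (w p * x p)^2 := Finset.sum_nonneg fun p _ => sq_nonneg _
  linarith

-- L2 : indicator domination for k ≥ 4
lemma quad_le_indicator {m : Type*} [Fintype m] [DecidableEq m] (A : Matrix m m ℝ) (K : Finset m)
    (hd : ∀ p, A p p = 1)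
    (h0 : ∀ p q, p ≠ q → (p ∉ K ∨ q ∉ K) → A p q = 0)
    (hub : ∀ p q, p ≠ q → A p q ≤ 1)
    (hlb : ∀ p q, p ≠ q → p ∈ K → q ∈ K → (((K.card : ℝ) - 1) / (K.card : ℝ))^2 < A p q)
    (hk : 4 ≤ K.card) (x : m → ℝ) :
    x ⬝ᵥ A *ᵥ x ≤ x ⬝ᵥ x + ((fun p => if p ∈ K then (1:ℝ) else 0) ⬝ᵥ x)^2 := by
  classical
  set κ : ℝ := (K.card : ℝ) with hκdef
  have hκ : (4:ℝ) ≤ κ := by rw [hκdef]; exact_mod_cast hk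
  have hκ0 : (0:ℝ) < κ := by linarith
  set θ : ℝ := ((κ - 1) / κ)^2 with hθdef
  have hθ0 : 0 ≤ θ := sq_nonneg _
  have hθ1 : θ ≤ 1 := by
    rw [hθdef, div_pow, div_le_one (by positivity)]
    nlinarith
  set S : ℝ := ∑ p ∈ K, x p with hSdef
  set T : ℝ := ∑ p ∈ K, |x p| with hTdef
  set W : ℝ := ∑ p ∈ K, (x p)^2 with hWdef
  have hwx : ((fun p => if p ∈ K then (1:ℝ) else 0) ⬝ᵥ x) = S := by
    rw [hSdef, dotProduct]
    simp [ite_mul, Finset.sum_ite_mem, Finset.univ_inter]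
  rw [hwx, quad_expand A x hd]
  have hxx : x ⬝ᵥ x = ∑ p, (x p)^2 := by simp [dotProduct, sq]
  rw [hxx]
  set c : ℝ := (1 - θ)/2 with hcdef
  have hc0 : 0 ≤ c := by rw [hcdef]; linarith
  have hW0 : 0 ≤ W := Finset.sum_nonneg fun p _ => sq_nonneg _
  -- restrict the off-diagonal sum to K
  have hE : ∑ p, ∑ q ∈ univ.erase p, A p q * (x p * x q)
      = ∑ p ∈ K, ∑ q ∈ K.erase p, A p q * (x p * x q) := by
    have hinner : ∀ p : m, ∑ q ∈ univ.erase p, A p q * (x p * x q)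
        = ∑ q ∈ K.erase p, A p q * (x p * x q) := by
      intro p
      refine (Finset.sum_subset (fun q hq => Finset.mem_erase.mpr
        ⟨(Finset.mem_erase.mp hq).1, Finset.mem_univ q⟩) ?_).symm
      intro q hq hq'
      have hqp : q ≠ p := (Finset.mem_erase.mp hq).1
      have hqK : q ∉ K := fun hqK => hq' (Finset.mem_erase.mpr ⟨hqp, hqK⟩)
      rw [h0 p q (Ne.symm hqp) (Or.inr hqK), zero_mul]
    rw [Finset.sum_congr rfl fun p _ => hinner p]
    refine (Finset.sum_subset (Finset.subset_univ K) ?_).symm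
    intro p _ hpK
    refine Finset.sum_eq_zero fun q hq => ?_
    rw [h0 p q (Ne.symm (Finset.mem_erase.mp hq).1) (Or.inl hpK), zero_mul]
  rw [hE]
  -- pointwise bound and exact evaluation of the majorant
  have hpt : ∀ p ∈ K, ∀ q ∈ K.erase p, A p q * (x p * x q)
      ≤ (1 - c) * (x p * x q) + c * (|x p| * |x q|) := by
    intro p hp q hq
    obtain ⟨hqp, hqK⟩ := Finset.mem_erase.mp hq
    have hAub := hub p q (Ne.symm hqp)
    have hAlb := hlb p q (Ne.symm hqp) hp hqK
    have habs : |x p| * |x q| = |x p * x q| := (abs_mul _ _).symm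
    rw [habs]
    rcases le_or_gt 0 (x p * x q) with ht | ht
    · rw [abs_of_nonneg ht]
      nlinarith
    · rw [abs_of_neg ht]
      have h2c : 1 - 2 * c = θ := by rw [hcdef]; ring
      nlinarith
  have hle1 : ∑ p ∈ K, ∑ q ∈ K.erase p, A p q * (x p * x q)
      ≤ ∑ p ∈ K, ∑ q ∈ K.erase p, ((1 - c) * (x p * x q) + c * (|x p| * |x q|)) :=
    Finset.sum_le_sum fun p hp => Finset.sum_le_sum fun q hq => hpt p hp q hq
  have I1 : ∑ p ∈ K, ∑ q ∈ K.erase p, x p * x q = S^2 - W := by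
    have : ∀ p ∈ K, ∑ q ∈ K.erase p, x p * x q = x p * S - (x p)^2 := by
      intro p hp
      rw [Finset.sum_erase_eq_sub hp, ← Finset.mul_sum, ← hSdef]; ring
    rw [Finset.sum_congr rfl this, Finset.sum_sub_distrib, ← Finset.sum_mul, ← hSdef, ← hWdef, sq]
  have I2 : ∑ p ∈ K, ∑ q ∈ K.erase p, |x p| * |x q| = T^2 - W := by
    have : ∀ p ∈ K, ∑ q ∈ K.erase p, |x p| * |x q| = |x p| * T - (x p)^2 := by
      intro p hp
      rw [Finset.sum_erase_eq_sub hp, ← Finset.mul_sum, ← hTdef, ← sq_abs (x p)]; ring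
    rw [Finset.sum_congr rfl this, Finset.sum_sub_distrib, ← Finset.sum_mul, ← hTdef, ← hWdef, sq]
  have hsplit : ∑ p ∈ K, ∑ q ∈ K.erase p, ((1 - c) * (x p * x q) + c * (|x p| * |x q|))
      = (1 - c) * (S^2 - W) + c * (T^2 - W) := by
    rw [← I1, ← I2, Finset.mul_sum, Finset.mul_sum]
    rw [← Finset.sum_add_distrib]
    refine Finset.sum_congr rfl fun p hp => ?_
    rw [Finset.mul_sum, Finset.mul_sum, ← Finset.sum_add_distrib]
  -- Cauchy-Schwarz
  have hCS : T^2 ≤ κ * W := by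
    have := sq_sum_le_card_mul_sum_sq (s := K) (f := fun p => |x p|)
    simpa [sq_abs, ← hTdef, ← hWdef, ← hκdef] using this
  have hcκ : c * κ ≤ 1 := by
    have h2c : 2 * c * κ^2 = 2 * κ - 1 := by
      rw [hcdef, hθdef]; field_simp; ring
    nlinarith [h2c, hκ0]
  have hfin : (1 - c) * (S^2 - W) + c * (T^2 - W) ≤ S^2 := by
    have h1 : c * T^2 ≤ c * (κ * W) := mul_le_mul_of_nonneg_left hCS hc0
    have h2 : c * (κ * W) ≤ W := by
      rw [← mul_assoc]
      have := mul_le_mul_of_nonneg_right hcκ hW0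
      linarith
    have h3 : 0 ≤ c * S^2 := mul_nonneg hc0 (sq_nonneg _)
    have hexp : (1 - c) * (S^2 - W) + c * (T^2 - W) = S^2 - W - c * S^2 + c * T^2 := by ring
    rw [hexp]
    linarith
  have : ∑ p ∈ K, ∑ q ∈ K.erase p, A p q * (x p * x q) ≤ S^2 := le_trans (hsplit ▸ hle1) hfin
  linarith

variable {m : Type*} [Fintype m] [DecidableEq m]

lemma dot_eq_inner (f g : EuclideanSpace ℝ m) :
    (⇑f : m → ℝ) ⬝ᵥ (⇑g : m → ℝ) = (inner ℝ f g : ℝ) := by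
  simp [dotProduct, PiLp.inner_apply, RCLike.inner_apply, mul_comm]

-- eigenvalues of the identity
lemma eigs_of_eq_one {A : Matrix m m ℝ} (hA : A.IsHermitian) (h1 : A = 1) (j : m) :
    hA.eigenvalues j = 1 := by
  subst h1
  have hmv := hA.mulVec_eigenvectorBasis j
  rw [one_mulVec] at hmv
  by_contra hne
  have hzero : (⇑(hA.eigenvectorBasis j) : m → ℝ) = 0 := by
    have : (1 - hA.eigenvalues j) • (⇑(hA.eigenvectorBasis j) : m → ℝ) = 0 := by
      rw [sub_smul, one_smul, ← hmv, sub_self]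
    rcases smul_eq_zero.mp this with h | h
    · exact absurd (by linarith [sub_eq_zero.mp h]) hne
    · exact h
  have hnorm := hA.eigenvectorBasis.orthonormal.1 j
  rw [show hA.eigenvectorBasis j = 0 from PiLp.ext fun i => congrFun hzero i] at hnorm
  simp at hnorm

-- trace equals sum of eigenvalues
lemma trace_eq_sum_eigs {A : Matrix m m ℝ} (hA : A.IsHermitian) :
    A.trace = ∑ j, hA.eigenvalues j := by
  have hU2 : (star hA.eigenvectorUnitary : Matrix m m ℝ) * (hA.eigenvectorUnitary : Matrix m m ℝ) = 1 := by
    simpa using Unitary.star_mul_self_of_mem hA.eigenvectorUnitary.2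
  conv_lhs => rw [hA.spectral_theorem]
  rw [Unitary.conjStarAlgAut_apply, trace_mul_cycle, hU2, one_mul, trace_diagonal]
  rfl

-- if all eigenvalues equal 1 then A = 1
lemma eq_one_of_eigs {A : Matrix m m ℝ} (hA : A.IsHermitian)
    (h : ∀ j, hA.eigenvalues j = 1) : A = 1 := by
  have hU1 : (hA.eigenvectorUnitary : Matrix m m ℝ) * (star hA.eigenvectorUnitary : Matrix m m ℝ) = 1 := by
    simpa using Unitary.mul_star_self_of_mem hA.eigenvectorUnitary.2
  have hD : diagonal (RCLike.ofReal ∘ hA.eigenvalues) = (1 : Matrix m m ℝ) := by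
    ext p q
    by_cases hpq : p = q
    · subst hpq; simp [h p]
    · simp [diagonal_apply_ne _ hpq, one_apply_ne hpq]
  conv_lhs => rw [hA.spectral_theorem]
  rw [Unitary.conjStarAlgAut_apply, hD, mul_one, hU1]

lemma count_le_one_of_dominated {A : Matrix m m ℝ} (hA : A.IsHermitian) (w : m → ℝ)
    (hbound : ∀ x : m → ℝ, x ⬝ᵥ A *ᵥ x ≤ x ⬝ᵥ x + (w ⬝ᵥ x)^2) :
    (univ.filter fun p => 1 < hA.eigenvalues p).card ≤ 1 := by
  rw [Finset.card_le_one]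
  intro a ha b hb
  by_contra hab
  have hea : 1 < hA.eigenvalues a := (Finset.mem_filter.mp ha).2
  have heb : 1 < hA.eigenvalues b := (Finset.mem_filter.mp hb).2
  set u : m → ℝ := ⇑(hA.eigenvectorBasis a) with hudef
  set v : m → ℝ := ⇑(hA.eigenvectorBasis b) with hvdef
  have horth := hA.eigenvectorBasis.orthonormal
  have huu : u ⬝ᵥ u = 1 := by
    rw [hudef, dot_eq_inner]
    simpa using orthonormal_iff_ite.mp horth a a
  have hvv : v ⬝ᵥ v = 1 := by
    rw [hvdef, dot_eq_inner]
    simpa using orthonormal_iff_ite.mp horth b b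
  have huv : u ⬝ᵥ v = 0 := by
    rw [hudef, hvdef, dot_eq_inner]
    simpa [hab] using orthonormal_iff_ite.mp horth a b
  have hvu : v ⬝ᵥ u = 0 := by
    rw [hudef, hvdef, dot_eq_inner]
    simpa [Ne.symm hab] using orthonormal_iff_ite.mp horth b a
  obtain ⟨c1, c2, hw0, hpos⟩ : ∃ c1 c2 : ℝ,
      c1 * (w ⬝ᵥ u) + c2 * (w ⬝ᵥ v) = 0 ∧ 0 < c1^2 + c2^2 := by
    by_cases hwu : w ⬝ᵥ u = 0
    · exact ⟨1, 0, by simp [hwu], by norm_num⟩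
    · refine ⟨-(w ⬝ᵥ v), w ⬝ᵥ u, by ring, ?_⟩
      have : 0 < (w ⬝ᵥ u)^2 := by positivity
      nlinarith [sq_nonneg (w ⬝ᵥ v)]
  set x : m → ℝ := c1 • u + c2 • v with hxdef
  have hAu : A *ᵥ u = hA.eigenvalues a • u := hA.mulVec_eigenvectorBasis a
  have hAv : A *ᵥ v = hA.eigenvalues b • v := hA.mulVec_eigenvectorBasis b
  have hAx : A *ᵥ x = (c1 * hA.eigenvalues a) • u + (c2 * hA.eigenvalues b) • v := by
    rw [hxdef, mulVec_add, mulVec_smul, mulVec_smul, hAu, hAv, smul_smul, smul_smul]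
  have hq1 : x ⬝ᵥ A *ᵥ x = c1^2 * hA.eigenvalues a + c2^2 * hA.eigenvalues b := by
    rw [hxdef, hAx]
    simp only [add_dotProduct, dotProduct_add, smul_dotProduct, dotProduct_smul, smul_eq_mul,
      huu, hvv, huv, hvu]
    ring
  have hq2 : x ⬝ᵥ x = c1^2 + c2^2 := by
    rw [hxdef]
    simp only [add_dotProduct, dotProduct_add, smul_dotProduct, dotProduct_smul, smul_eq_mul,
      huu, hvv, huv, hvu]
    ring
  have hq3 : w ⬝ᵥ x = 0 := by
    rw [hxdef]
    simp only [dotProduct_add, dotProduct_smul, smul_eq_mul]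
    exact hw0
  have := hbound x
  rw [hq1, hq2, hq3] at this
  rcases eq_or_ne c1 0 with h0 | h0
  · have hc2 : c2 ≠ 0 := by
      intro h; rw [h0, h] at hpos; norm_num at hpos
    have h2 : 0 < c2^2 := by positivity
    nlinarith
  · have h1 : 0 < c1^2 := by positivity
    nlinarith [mul_nonneg (sq_nonneg c2) (by linarith : (0:ℝ) ≤ hA.eigenvalues b - 1)]

set_option maxHeartbeats 800000 in
lemma comp_count (A : Matrix m m ℝ) (hA : A.IsHermitian) (K : Finset m)
    (hdiag : ∀ p, A p p = 1)
    (hposK : ∀ p q, p ≠ q → p ∈ K → q ∈ K → 0 < A p q)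
    (hzero : ∀ p q, p ≠ q → (p ∉ K ∨ q ∉ K) → A p q = 0)
    (hle : ∀ p q, p ≠ q → A p q ≤ 1)
    (hthr : 4 ≤ K.card → ∀ p q, p ≠ q → A p q ≠ 0 →
      (((K.card : ℝ) - 1) / (K.card : ℝ)) ^ 2 < A p q) :
    (univ.filter fun p => 1 < hA.eigenvalues p).card = if 2 ≤ K.card then 1 else 0 := by
  have hsymm : ∀ p q, A q p = A p q := by
    intro p q
    conv_lhs => rw [← hA]
    simp [conjTranspose_apply]
  by_cases hk2 : 2 ≤ K.card
  · rw [if_pos hk2]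
    -- lower bound: at least one eigenvalue > 1
    have hlow : 1 ≤ (univ.filter fun p => 1 < hA.eigenvalues p).card := by
      rw [Nat.one_le_iff_ne_zero, ← Nat.pos_iff_ne_zero, Finset.card_pos]
      by_contra hempty
      rw [Finset.not_nonempty_iff_eq_empty, Finset.filter_eq_empty_iff] at hempty
      have hall : ∀ j, hA.eigenvalues j ≤ 1 := fun j => le_of_not_gt (hempty (mem_univ j))
      have htr : A.trace = (Fintype.card m : ℝ) := by
        rw [Matrix.trace]
        simp [Matrix.diag, hdiag]
      have hsum : ∑ j, hA.eigenvalues j = ∑ j : m, (1:ℝ) := by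
        rw [← trace_eq_sum_eigs hA, htr]; simp
      have hone : ∀ j ∈ univ, hA.eigenvalues j = 1 :=
        (Finset.sum_eq_sum_iff_of_le (fun i _ => hall i)).mp hsum
      have hAone : A = 1 := eq_one_of_eigs hA (fun j => hone j (mem_univ j))
      obtain ⟨p, hp, q, hq, hpq⟩ := Finset.one_lt_card.mp hk2
      have := hposK p q hpq hp hq
      rw [hAone, one_apply_ne hpq] at this
      exact lt_irrefl 0 this
    -- upper bound: at most one
    have hup : (univ.filter fun p => 1 < hA.eigenvalues p).card ≤ 1 := by
      rcases lt_or_ge K.card 4 with h4 | h4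
      · -- card K = 2 or 3 : explicit rank-one dominating vector
        have h23 : K.card = 2 ∨ K.card = 3 := by omega
        rcases h23 with h | h
        · -- card = 2
          obtain ⟨a, b, hab, hKab⟩ := Finset.card_eq_two.mp h
          have haK : a ∈ K := by rw [hKab]; simp
          have hbK : b ∈ K := by rw [hKab]; simp
          have hABpos : 0 < A a b := hposK a b hab haK hbK
          set w : m → ℝ := fun p => if p = a ∨ p = b then Real.sqrt (A a b) else 0 with hwdef
          refine count_le_one_of_dominated hA w (quad_le_rankone A w hdiag ?_)
          intro p q hpq
          by_cases hpK : p = a ∨ p = b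
          · by_cases hqK : q = a ∨ q = b
            · have : A p q = A a b := by
                rcases hpK with hp | hp <;> rcases hqK with hq | hq
                · exact absurd (hp.trans hq.symm) hpq
                · rw [hp, hq]
                · rw [hp, hq]; exact hsymm a b
                · exact absurd (hp.trans hq.symm) hpq
              rw [this, hwdef]
              simp only [if_pos hpK, if_pos hqK]
              rw [Real.mul_self_sqrt hABpos.le]
            · have hq' : q ∉ K := by rw [hKab]; simpa using hqK
              rw [hzero p q hpq (Or.inr hq'), hwdef]
              simp [hqK]
          · have hp' : p ∉ K := by rw [hKab]; simpa using hpK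
            rw [hzero p q hpq (Or.inl hp'), hwdef]
            simp [hpK]
        · -- card = 3
          obtain ⟨a, b, c, hab, hac, hbc, hKabc⟩ := Finset.card_eq_three.mp h
          have haK : a ∈ K := by rw [hKabc]; simp
          have hbK : b ∈ K := by rw [hKabc]; simp
          have hcK : c ∈ K := by rw [hKabc]; simp
          have hABpos : 0 < A a b := hposK a b hab haK hbK
          have hACpos : 0 < A a c := hposK a c hac haK hcK
          have hBCpos : 0 < A b c := hposK b c hbc hbK hcK
          set w : m → ℝ := fun p =>
            if p = a then Real.sqrt (A a b * A a c / A b c)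
            else if p = b then Real.sqrt (A a b * A b c / A a c)
            else if p = c then Real.sqrt (A a c * A b c / A a b)
            else 0 with hwdef
          refine count_le_one_of_dominated hA w (quad_le_rankone A w hdiag ?_)
          have hwa : w a = Real.sqrt (A a b * A a c / A b c) := by simp [hwdef]
          have hwb : w b = Real.sqrt (A a b * A b c / A a c) := by
            simp [hwdef, Ne.symm hab]
          have hwc : w c = Real.sqrt (A a c * A b c / A a b) := by
            simp [hwdef, Ne.symm hac, Ne.symm hbc]
          have hab' : w a * w b = A a b := by
            rw [hwa, hwb, ← Real.sqrt_mul (by positivity)]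
            rw [show A a b * A a c / A b c * (A a b * A b c / A a c) = (A a b)^2 by
              field_simp]
            exact Real.sqrt_sq hABpos.le
          have hac' : w a * w c = A a c := by
            rw [hwa, hwc, ← Real.sqrt_mul (by positivity)]
            rw [show A a b * A a c / A b c * (A a c * A b c / A a b) = (A a c)^2 by
              field_simp]
            exact Real.sqrt_sq hACpos.le
          have hbc' : w b * w c = A b c := by
            rw [hwb, hwc, ← Real.sqrt_mul (by positivity)]
            rw [show A a b * A b c / A a c * (A a c * A b c / A a b) = (A b c)^2 by
              field_simp]
            exact Real.sqrt_sq hBCpos.le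
          intro p q hpq
          have houtp : p ∉ ({a, b, c} : Finset m) → w p = 0 := by
            intro hp
            simp only [Finset.mem_insert, Finset.mem_singleton, not_or] at hp
            simp [hwdef, hp.1, hp.2.1, hp.2.2]
          have houtq : q ∉ ({a, b, c} : Finset m) → w q = 0 := by
            intro hq
            simp only [Finset.mem_insert, Finset.mem_singleton, not_or] at hq
            simp [hwdef, hq.1, hq.2.1, hq.2.2]
          by_cases hpK : p ∈ ({a, b, c} : Finset m)
          · by_cases hqK : q ∈ ({a, b, c} : Finset m)
            · simp only [Finset.mem_insert, Finset.mem_singleton] at hpK hqK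
              rcases hpK with hp | hp | hp <;> rcases hqK with hq | hq | hq
              · exact absurd (hp.trans hq.symm) hpq
              · rw [hp, hq]; exact hab'.symm
              · rw [hp, hq]; exact hac'.symm
              · rw [hp, hq, hsymm a b, ← hab']; ring
              · exact absurd (hp.trans hq.symm) hpq
              · rw [hp, hq]; exact hbc'.symm
              · rw [hp, hq, hsymm a c, ← hac']; ring
              · rw [hp, hq, hsymm b c, ← hbc']; ring
              · exact absurd (hp.trans hq.symm) hpq
            · rw [hzero p q hpq (Or.inr (by rw [hKabc]; exact hqK)), houtq hqK, mul_zero]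
          · rw [hzero p q hpq (Or.inl (by rw [hKabc]; exact hpK)), houtp hpK, zero_mul]
      · -- card ≥ 4 : indicator vector
        refine count_le_one_of_dominated hA (fun p => if p ∈ K then (1:ℝ) else 0)
          (quad_le_indicator A K hdiag hzero hle ?_ h4)
        intro p q hpq hp hq
        exact hthr h4 p q hpq (ne_of_gt (hposK p q hpq hp hq))
    omega
  · rw [if_neg hk2]
    have hAone : A = 1 := by
      ext p q
      by_cases hpq : p = q
      · subst hpq; simp [hdiag p]
      · have : p ∉ K ∨ q ∉ K := by
          by_contra hcon
          push_neg at hcon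
          exact hk2 (Finset.one_lt_card.mpr ⟨p, hcon.1, q, hcon.2, hpq⟩)
        rw [hzero p q hpq this, one_apply_ne hpq]
    rw [Finset.card_eq_zero, Finset.filter_eq_empty_iff]
    intro j _
    rw [eigs_of_eq_one hA hAone j]
    exact lt_irrefl 1

lemma roots_prod_X_sub_C' {ι : Type*} [Fintype ι] (g : ι → ℝ) :
    (∏ j, (X - Polynomial.C (g j))).roots = Multiset.map g Finset.univ.val := by
  have : ∏ j, (X - Polynomial.C (g j))
      = ((Finset.univ.val.map g).map fun r => X - Polynomial.C r).prod := by
    rw [Multiset.map_map]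
    rfl
  rw [this, Polynomial.roots_multiset_prod_X_sub_C]

lemma card_filter_eq_countP' {ι : Type*} [Fintype ι] (p : ι → Prop) [DecidablePred p] :
    (Finset.univ.filter p).card = Multiset.countP p Finset.univ.val := by
  rw [Finset.card, Finset.filter_val, Multiset.countP_eq_card_filter]

/-- **Theorem 1 (matrix-algebraic content).**
The number of eigenvalues of the composite coherence matrix `C` that are strictly
greater than one (counted with multiplicity) equals the number of signal components
exhibiting nonzero correlation, i.e. the number of indices `i` with `k⁽ⁱ⁾ = |K⁽ⁱ⁾| ≥ 2`. -/
theorem eigenvalues_gt_one_card_eq_correlated_components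
    (n P : ℕ) (hn : 1 ≤ n) (hP : 1 ≤ P)
    (R : Fin n → Matrix (Fin P) (Fin P) ℝ)
    (K : Fin n → Finset (Fin P))
    (hsym : ∀ i, (R i).IsHermitian)
    (hdiag : ∀ i p, R i p p = 1)
    (hposK : ∀ i p q, p ≠ q → p ∈ K i → q ∈ K i → 0 < R i p q)
    (hzero : ∀ i p q, p ≠ q → (p ∉ K i ∨ q ∉ K i) → R i p q = 0)
    (hle : ∀ i p q, p ≠ q → R i p q ≤ 1)
    (hthr : ∀ i, 4 ≤ (K i).card → ∀ p q, p ≠ q → R i p q ≠ 0 →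
      ((((K i).card : ℝ) - 1) / ((K i).card : ℝ)) ^ 2 < R i p q)
    (Q : Matrix (Fin P × Fin n) (Fin P × Fin n) ℝ)
    (hQ1 : Q * Qᵀ = 1) (hQ2 : Qᵀ * Q = 1)
    (C : Matrix (Fin P × Fin n) (Fin P × Fin n) ℝ)
    (hCdef : C = Q * Matrix.blockDiagonal R * Qᵀ)
    (hC : C.IsHermitian) :
    (Finset.univ.filter fun j : Fin P × Fin n => 1 < hC.eigenvalues j).card
      = (Finset.univ.filter fun i : Fin n => 2 ≤ (K i).card).card := by
  classical
  -- characteristic polynomial identities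
  have hcp1 : C.charpoly = (Matrix.blockDiagonal R).charpoly := by
    rw [hCdef]
    exact charpoly_conj_aux Q Qᵀ _ hQ1 hQ2
  have hcp2 : C.charpoly = ∏ j : Fin P × Fin n, (X - Polynomial.C (hC.eigenvalues j)) :=
    charpoly_isHermitian hC
  have hcp3 : (Matrix.blockDiagonal R).charpoly
      = ∏ y : Fin n × Fin P, (X - Polynomial.C ((hsym y.1).eigenvalues y.2)) := by
    rw [charpoly_blockDiagonal']
    rw [← Finset.univ_product_univ, Finset.prod_product]
    exact Finset.prod_congr rfl fun i _ => charpoly_isHermitian (hsym i)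
  -- multiset of eigenvalues equality
  have hms : Multiset.map hC.eigenvalues Finset.univ.val
      = Multiset.map (fun y : Fin n × Fin P => (hsym y.1).eigenvalues y.2) Finset.univ.val := by
    rw [← roots_prod_X_sub_C' hC.eigenvalues, ← roots_prod_X_sub_C'
      (fun y : Fin n × Fin P => (hsym y.1).eigenvalues y.2), ← hcp2, ← hcp3, hcp1]
  -- counting
  have hcount1 : (Finset.univ.filter fun j : Fin P × Fin n => 1 < hC.eigenvalues j).card
      = (Finset.univ.filter fun y : Fin n × Fin P => 1 < (hsym y.1).eigenvalues y.2).card := by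
    rw [card_filter_eq_countP', card_filter_eq_countP']
    have h1 := Multiset.countP_map hC.eigenvalues Finset.univ.val (fun r => 1 < r)
    have h2 := Multiset.countP_map (fun y : Fin n × Fin P => (hsym y.1).eigenvalues y.2)
      Finset.univ.val (fun r => 1 < r)
    rw [Multiset.countP_eq_card_filter, Multiset.countP_eq_card_filter, ← h1, ← h2, hms]
  rw [hcount1]
  -- split the product-type count into a sum over components
  have hcount2 : (Finset.univ.filter fun y : Fin n × Fin P => 1 < (hsym y.1).eigenvalues y.2).card
      = ∑ i : Fin n, (Finset.univ.filter fun p : Fin P => 1 < (hsym i).eigenvalues p).card := by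
    rw [Finset.card_filter]
    rw [Fintype.sum_prod_type]
    exact Finset.sum_congr rfl fun i _ => (Finset.card_filter _ _).symm
  rw [hcount2]
  have hcomp : ∀ i : Fin n,
      (Finset.univ.filter fun p : Fin P => 1 < (hsym i).eigenvalues p).card
        = if 2 ≤ (K i).card then 1 else 0 := fun i =>
    comp_count (R i) (hsym i) (K i) (hdiag i) (hposK i) (hzero i) (hle i) (hthr i)
  rw [Finset.sum_congr rfl fun i _ => hcomp i, Finset.card_filter]
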